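/- For n ∈ ℕ and 0 ≤ k ≤ n, the norms ‖·‖_{Han_k} and ‖·‖_{P_{d,k}⊙P_{d,n-k}} on P_{d,n} are dual to each other with respect to the Cauchy pairing: the map q ↦ ⟨·,q⟩₂ is a conjugate-linear isometric isomorphism from (P_{d,n}, ‖·‖_{Han_k}) onto the dual of (P_{d,n}, ‖·‖_{P_{d,k}⊙P_{d,n-k}}), and likewise with the two norms interchanged; in particular ‖q‖_{Han_k} = sup{|⟨h,q⟩₂| : h ∈ P_{d,n}, ‖h‖_{P_{d,k}⊙P_{d,n-k}} ≤ 1}. -/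

import Mathlib

noncomputable section
open scoped ComplexOrder
namespace WP

abbrev MvP (d : ℕ) := MvPolynomial (Fin d) ℂ

/-- The Cauchy pairing `⟨p,q⟩₂ = ∑_α a_α conj(b_α)` of coefficient vectors. -/
def pairing {d : ℕ} (p q : MvP d) : ℂ :=
  ∑ α ∈ p.support, p.coeff α * (starRingEnd ℂ) (q.coeff α)

/-- The Hardy norm `‖p‖₂`: the `ℓ²` norm of the coefficient vector. -/
def norm2 {d : ℕ} (p : MvP d) : ℝ :=
  Real.sqrt (∑ α ∈ p.support, ‖p.coeff α‖ ^ 2)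

/-- The weak product norm `‖p‖_{P_{d,k} ⊙ P_{d,l}}`. -/
def wpNorm (d k l : ℕ) (p : MvP d) : ℝ :=
  sInf {x : ℝ | ∃ (m : ℕ) (f g : Fin m → MvP d),
    (∀ j, (f j).IsHomogeneous k) ∧ (∀ j, (g j).IsHomogeneous l) ∧
    p = ∑ j, f j * g j ∧ x = ∑ j, norm2 (f j) * norm2 (g j)}

/-- The weak product norm `‖p‖_{Z_d ⊙ P_{d,k} ⊙ P_{d,l}}`. -/
def zwpNorm (d k l : ℕ) (p : MvP d) : ℝ :=
  sInf {x : ℝ | ∃ f : Fin d → MvP d,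
    (∀ i, (f i).IsHomogeneous (k + l)) ∧
    p = ∑ i, MvPolynomial.X i * f i ∧ x = ∑ i, wpNorm d k l (f i)}

/-- `|||p|||₁ = max_{0 ≤ k ≤ n} ‖p‖_{P_{d,k} ⊙ P_{d,n-k}}`. -/
def triple1 (d n : ℕ) (p : MvP d) : ℝ :=
  ⨆ k : Fin (n + 1), wpNorm d k (n - k) p

/-- `|||p|||₂ = max_{0 ≤ k ≤ n-1} ‖p‖_{Z_d ⊙ P_{d,k} ⊙ P_{d,n-k-1}}`. -/
def triple2 (d n : ℕ) (p : MvP d) : ℝ :=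
  ⨆ k : Fin n, zwpNorm d k (n - 1 - k) p

/-- `f̂`: the polynomial whose coefficients are the conjugates of those of `f`. -/
def hatp {d : ℕ} (f : MvP d) : MvP d := MvPolynomial.map (starRingEnd ℂ) f

/-- The Hankel norm `‖q‖_{Han_k} = ‖Γ_q|_{P_{d,k}}‖` for `q ∈ P_{d,n}`, computed via
the defining property `⟨Γ_q f, g⟩₂ = ⟨q, f̂ g⟩₂` (and the fact that `Γ_q` maps
`P_{d,k}` into `P_{d,n-k}`). -/
def hanNorm (d n k : ℕ) (q : MvP d) : ℝ :=
  sSup {x : ℝ | ∃ f g : MvP d, f.IsHomogeneous k ∧ g.IsHomogeneous (n - k) ∧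
    norm2 f ≤ 1 ∧ norm2 g ≤ 1 ∧ x = ‖pairing q (hatp f * g)‖}

open MvPolynomial in
lemma pairing_eq {d : ℕ} (p q : MvP d) {s : Finset (Fin d →₀ ℕ)} (hs : p.support ⊆ s) :
    pairing p q = ∑ α ∈ s, p.coeff α * (starRingEnd ℂ) (q.coeff α) := by
  unfold pairing
  refine Finset.sum_subset hs fun x _ hx => ?_
  rw [MvPolynomial.notMem_support_iff.mp hx, zero_mul]

open MvPolynomial in
lemma norm2_sq_eq {d : ℕ} (p : MvP d) {s : Finset (Fin d →₀ ℕ)} (hs : p.support ⊆ s) :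
    norm2 p = Real.sqrt (∑ α ∈ s, ‖p.coeff α‖ ^ 2) := by
  unfold norm2
  congr 1
  refine Finset.sum_subset hs ?_
  intro x _ hx
  rw [MvPolynomial.notMem_support_iff.mp hx, norm_zero]
  simp

lemma norm2_nonneg {d : ℕ} (p : MvP d) : 0 ≤ norm2 p := Real.sqrt_nonneg _

lemma norm2_zero {d : ℕ} : norm2 (0 : MvP d) = 0 := by
  simp [norm2]

lemma norm2_eq_zero {d : ℕ} {p : MvP d} (h : norm2 p = 0) : p = 0 := by
  unfold norm2 at h
  rw [Real.sqrt_eq_zero (by positivity)] at h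
  have := (Finset.sum_eq_zero_iff_of_nonneg (fun i _ => by positivity)).mp h
  ext α
  by_cases hα : α ∈ p.support
  · have := this α hα
    simpa using this
  · simpa using MvPolynomial.notMem_support_iff.mp hα

lemma coeff_norm_le_norm2 {d : ℕ} (p : MvP d) (α : Fin d →₀ ℕ) :
    ‖p.coeff α‖ ≤ norm2 p := by
  by_cases hα : α ∈ p.support
  · have h1 : ‖p.coeff α‖ ^ 2 ≤ ∑ β ∈ p.support, ‖p.coeff β‖ ^ 2 :=
      Finset.single_le_sum (f := fun β => ‖p.coeff β‖ ^ 2) (fun i _ => by positivity) hα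
    calc ‖p.coeff α‖ = Real.sqrt (‖p.coeff α‖ ^ 2) := by
          rw [Real.sqrt_sq (norm_nonneg _)]
      _ ≤ norm2 p := Real.sqrt_le_sqrt h1
  · rw [MvPolynomial.notMem_support_iff.mp hα, norm_zero]; exact norm2_nonneg p

lemma norm2_smul {d : ℕ} (c : ℂ) (p : MvP d) : norm2 (c • p) = ‖c‖ * norm2 p := by
  have hsub : (c • p).support ⊆ p.support := by
    intro α hα
    simp only [MvPolynomial.mem_support_iff, MvPolynomial.coeff_smul] at hα ⊢
    exact fun h => hα (by rw [h, smul_zero])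
  rw [norm2_sq_eq (c • p) hsub]
  unfold norm2
  rw [← Real.sqrt_sq (norm_nonneg c), ← Real.sqrt_mul (by positivity)]
  congr 1
  rw [Finset.mul_sum]
  refine Finset.sum_congr rfl fun α _ => ?_
  rw [MvPolynomial.coeff_smul, smul_eq_mul, norm_mul]
  ring

lemma coeff_hatp {d : ℕ} (f : MvP d) (α : Fin d →₀ ℕ) :
    (hatp f).coeff α = (starRingEnd ℂ) (f.coeff α) := MvPolynomial.coeff_map _ _ _

lemma hatp_support {d : ℕ} (f : MvP d) : (hatp f).support = f.support := by
  ext α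
  simp [MvPolynomial.mem_support_iff, coeff_hatp]

lemma norm2_hatp {d : ℕ} (f : MvP d) : norm2 (hatp f) = norm2 f := by
  unfold norm2
  rw [hatp_support]
  congr 1
  exact Finset.sum_congr rfl fun α _ => by rw [coeff_hatp]; simp

lemma hatp_hatp {d : ℕ} (f : MvP d) : hatp (hatp f) = f := by
  ext α
  simp [coeff_hatp]

lemma hatp_mul {d : ℕ} (f g : MvP d) : hatp (f * g) = hatp f * hatp g :=
  _root_.map_mul (MvPolynomial.map (starRingEnd ℂ)) f g

lemma hatp_zero {d : ℕ} : hatp (0 : MvP d) = 0 := by ext α; simp [coeff_hatp]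

lemma hatp_smul {d : ℕ} (c : ℂ) (f : MvP d) :
    hatp (c • f) = (starRingEnd ℂ) c • hatp f := by
  ext α
  simp [coeff_hatp, MvPolynomial.coeff_smul, map_mul]

lemma hatp_isHomogeneous {d k : ℕ} {f : MvP d} (hf : f.IsHomogeneous k) :
    (hatp f).IsHomogeneous k := by
  intro α hα
  rw [coeff_hatp] at hα
  exact hf (fun h => hα (by rw [h, map_zero]))

lemma pairing_conj {d : ℕ} (p q : MvP d) :
    pairing p q = (starRingEnd ℂ) (pairing q p) := by
  rw [pairing_eq p q (s := p.support ∪ q.support) Finset.subset_union_left,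
    pairing_eq q p (s := p.support ∪ q.support) Finset.subset_union_right, map_sum]
  refine Finset.sum_congr rfl fun α _ => ?_
  simp only [map_mul, Complex.conj_conj]
  ring

lemma norm_pairing_comm {d : ℕ} (p q : MvP d) : ‖pairing p q‖ = ‖pairing q p‖ := by
  rw [pairing_conj]; exact RCLike.norm_conj _

lemma pairing_zero_left {d : ℕ} (q : MvP d) : pairing 0 q = 0 := by
  simp [pairing]

lemma pairing_zero_right {d : ℕ} (p : MvP d) : pairing p 0 = 0 := by
  simp [pairing]

lemma pairing_add_left {d : ℕ} (p p' q : MvP d) :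
    pairing (p + p') q = pairing p q + pairing p' q := by
  rw [pairing_eq (p + p') q (s := p.support ∪ p'.support)
      (Finset.Subset.trans (MvPolynomial.support_add) (by rfl)),
    pairing_eq p q (s := p.support ∪ p'.support) Finset.subset_union_left,
    pairing_eq p' q (s := p.support ∪ p'.support) Finset.subset_union_right,
    ← Finset.sum_add_distrib]
  refine Finset.sum_congr rfl fun α _ => ?_
  rw [MvPolynomial.coeff_add]
  ring

lemma pairing_smul_left {d : ℕ} (c : ℂ) (p q : MvP d) :
    pairing (c • p) q = c * pairing p q := by
  rw [pairing_eq (c • p) q (s := p.support) ?hs, pairing, Finset.mul_sum]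
  · refine Finset.sum_congr rfl fun α _ => ?_
    rw [MvPolynomial.coeff_smul]
    simp only [smul_eq_mul]
    ring
  · intro α hα
    simp only [MvPolynomial.mem_support_iff, MvPolynomial.coeff_smul] at hα ⊢
    exact fun h => hα (by rw [h, smul_zero])

lemma pairing_smul_right {d : ℕ} (c : ℂ) (p q : MvP d) :
    pairing p (c • q) = (starRingEnd ℂ) c * pairing p q := by
  rw [pairing_conj, pairing_smul_left, map_mul, ← pairing_conj]

lemma pairing_add_right {d : ℕ} (p q q' : MvP d) :
    pairing p (q + q') = pairing p q + pairing p q' := by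
  rw [pairing_conj, pairing_add_left, map_add, ← pairing_conj, ← pairing_conj]

lemma pairing_sum_left {d : ℕ} {m : ℕ} (f : Fin m → MvP d) (q : MvP d) :
    pairing (∑ j, f j) q = ∑ j, pairing (f j) q := by
  induction m with
  | zero => simp [pairing_zero_left]
  | succ m ih =>
      rw [Fin.sum_univ_castSucc, Fin.sum_univ_castSucc (f := fun j => pairing (f j) q),
        pairing_add_left, ih]

lemma pairing_self {d : ℕ} (p : MvP d) : pairing p p = ((norm2 p) ^ 2 : ℝ) := by
  unfold pairing norm2
  rw [Real.sq_sqrt (by positivity)]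
  push_cast
  refine Finset.sum_congr rfl fun α _ => ?_
  rw [Complex.mul_conj]
  norm_cast
  simp [Complex.normSq_eq_norm_sq]


/-- The set of multi-indices of total degree `k` is finite. -/
lemma degSet_finite (d k : ℕ) : {α : Fin d →₀ ℕ | α.degree = k}.Finite := by
  rw [← Set.finite_coe_iff]
  have : ∀ α : {α : Fin d →₀ ℕ | α.degree = k}, ∀ i, (α : Fin d →₀ ℕ) i < k + 1 :=
    fun α i => Nat.lt_succ_of_le (le_of_le_of_eq (Finsupp.le_degree i (α : Fin d →₀ ℕ)) α.2)
  have hinj : Function.Injective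
      (fun α : {α : Fin d →₀ ℕ | α.degree = k} => fun i => (⟨(α : Fin d →₀ ℕ) i, this α i⟩ : Fin (k+1))) := by
    intro a b hab
    ext i
    have := congrFun hab i
    simpa using congrArg Fin.val this
  exact Finite.of_injective _ hinj

def degFinset (d k : ℕ) : Finset (Fin d →₀ ℕ) := (degSet_finite d k).toFinset

lemma support_subset_degFinset {d k : ℕ} {f : MvP d} (hf : f.IsHomogeneous k) :
    f.support ⊆ degFinset d k := by
  intro α hα
  simp only [degFinset, Set.Finite.mem_toFinset, Set.mem_setOf_eq]
  rw [Finsupp.degree_eq_weight_one]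
  exact hf (MvPolynomial.mem_support_iff.mp hα)

/-- The `ℓ¹`-norm of the coefficients. -/
def l1 {d : ℕ} (f : MvP d) : ℝ := ∑ α ∈ f.support, ‖f.coeff α‖

lemma l1_nonneg {d : ℕ} (f : MvP d) : 0 ≤ l1 f :=
  Finset.sum_nonneg fun _ _ => norm_nonneg _

lemma l1_le {d k : ℕ} {f : MvP d} (hf : f.IsHomogeneous k) :
    l1 f ≤ (degFinset d k).card * norm2 f := by
  calc l1 f ≤ ∑ _α ∈ f.support, norm2 f :=
        Finset.sum_le_sum fun α _ => coeff_norm_le_norm2 f α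
    _ = f.support.card * norm2 f := by rw [Finset.sum_const, nsmul_eq_mul]
    _ ≤ (degFinset d k).card * norm2 f := by
        have := Finset.card_le_card (support_subset_degFinset hf)
        have h2 := norm2_nonneg f
        have h3 : (f.support.card : ℝ) ≤ (degFinset d k).card := by exact_mod_cast this
        exact mul_le_mul_of_nonneg_right h3 h2

lemma coeff_mul_norm_le {d : ℕ} (f g : MvP d) (α : Fin d →₀ ℕ) :
    ‖(f * g).coeff α‖ ≤ l1 f * l1 g := by
  classical
  rw [MvPolynomial.coeff_mul]
  calc ‖∑ x ∈ Finset.HasAntidiagonal.antidiagonal α, f.coeff x.1 * g.coeff x.2‖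
      ≤ ∑ x ∈ Finset.HasAntidiagonal.antidiagonal α, ‖f.coeff x.1‖ * ‖g.coeff x.2‖ := by
        refine (norm_sum_le _ _).trans ?_
        refine Finset.sum_le_sum fun x _ => ?_
        rw [norm_mul]
    _ ≤ ∑ x ∈ f.support ×ˢ g.support, ‖f.coeff x.1‖ * ‖g.coeff x.2‖ := by
        rw [← Finset.sum_filter_add_sum_filter_not (Finset.HasAntidiagonal.antidiagonal α)
          (fun x => x ∈ f.support ×ˢ g.support)]
        have h2 : ∑ x ∈ (Finset.HasAntidiagonal.antidiagonal α).filter (fun x => ¬ x ∈ f.support ×ˢ g.support),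
            ‖f.coeff x.1‖ * ‖g.coeff x.2‖ = 0 := by
          refine Finset.sum_eq_zero fun x hx => ?_
          simp only [Finset.mem_filter, Finset.mem_product, not_and_or] at hx
          rcases hx.2 with h | h
          · rw [MvPolynomial.notMem_support_iff.mp h, norm_zero, zero_mul]
          · rw [MvPolynomial.notMem_support_iff.mp h, norm_zero, mul_zero]
        rw [h2, add_zero]
        refine Finset.sum_le_sum_of_subset_of_nonneg ?_ (fun x _ _ => by positivity)
        intro x hx
        exact (Finset.mem_filter.mp hx).2
    _ = l1 f * l1 g := by
        rw [l1, l1, Finset.sum_mul_sum]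
        rw [Finset.sum_product]

lemma norm_pairing_le_l1_mul {d : ℕ} (q r : MvP d) (M : ℝ)
    (hM : ∀ α, ‖r.coeff α‖ ≤ M) :
    ‖pairing q r‖ ≤ l1 q * M := by
  unfold pairing
  refine (norm_sum_le _ _).trans ?_
  rw [l1, Finset.sum_mul]
  refine Finset.sum_le_sum fun α _ => ?_
  rw [norm_mul, RCLike.norm_conj]
  exact mul_le_mul_of_nonneg_left (hM α) (norm_nonneg _)


lemma degree_add {d : ℕ} (a b : Fin d →₀ ℕ) : (a + b).degree = a.degree + b.degree := by
  simp only [Finsupp.degree_eq_weight_one]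
  exact map_add _ a b

lemma degree_single {d : ℕ} (i : Fin d) (m : ℕ) : (Finsupp.single i m).degree = m := by
  rw [Finsupp.degree_eq_weight_one, Finsupp.weight_apply, Finsupp.sum_single_index]
  · simp
  · simp

lemma exists_split {n k : ℕ} (hk : k ≤ n) {d : ℕ} (α : Fin d →₀ ℕ) (hα : α.degree = n) :
    ∃ β γ : Fin d →₀ ℕ, β.degree = k ∧ γ.degree = n - k ∧ α = β + γ := by
  induction k with
  | zero => exact ⟨0, α, map_zero _, by simpa using hα, (zero_add α).symm⟩
  | succ k ih =>
      obtain ⟨β, γ, hβ, hγ, hab⟩ := ih (Nat.le_of_succ_le hk)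
      have hγ0 : γ ≠ 0 := by
        intro h
        rw [h, map_zero] at hγ
        omega
      obtain ⟨i, hi⟩ : ∃ i, γ i ≠ 0 := by
        by_contra hcon
        push_neg at hcon
        exact hγ0 (Finsupp.ext fun i => hcon i)
      have hle : Finsupp.single i 1 ≤ γ := by
        rw [Finsupp.single_le_iff]
        omega
      refine ⟨β + Finsupp.single i 1, γ - Finsupp.single i 1, ?_, ?_, ?_⟩
      · rw [degree_add, hβ, degree_single]
      · have hres : Finsupp.single i 1 + (γ - Finsupp.single i 1) = γ :=
          add_tsub_cancel_of_le hle
        have := congrArg Finsupp.degree hres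
        rw [degree_add, degree_single, hγ] at this
        omega
      · have hres : Finsupp.single i 1 + (γ - Finsupp.single i 1) = γ :=
          add_tsub_cancel_of_le hle
        rw [hab]
        nth_rewrite 1 [← hres]
        exact (add_assoc _ _ _).symm

def wpSet (d k l : ℕ) (p : MvP d) : Set ℝ :=
  {x : ℝ | ∃ (m : ℕ) (f g : Fin m → MvP d),
    (∀ j, (f j).IsHomogeneous k) ∧ (∀ j, (g j).IsHomogeneous l) ∧
    p = ∑ j, f j * g j ∧ x = ∑ j, norm2 (f j) * norm2 (g j)}

lemma wpNorm_eq (d k l : ℕ) (p : MvP d) : wpNorm d k l p = sInf (wpSet d k l p) := rfl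

lemma wpSet_nonneg {d k l : ℕ} {p : MvP d} {x : ℝ} (hx : x ∈ wpSet d k l p) : 0 ≤ x := by
  obtain ⟨m, f, g, _, _, _, rfl⟩ := hx
  exact Finset.sum_nonneg fun j _ => mul_nonneg (norm2_nonneg _) (norm2_nonneg _)

lemma bddBelow_wpSet (d k l : ℕ) (p : MvP d) : BddBelow (wpSet d k l p) :=
  ⟨0, fun _ hx => wpSet_nonneg hx⟩

lemma wpNorm_nonneg (d k l : ℕ) (p : MvP d) : 0 ≤ wpNorm d k l p :=
  Real.sInf_nonneg fun _ hx => wpSet_nonneg hx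

lemma wpNorm_le_of_mem {d k l : ℕ} {p : MvP d} {x : ℝ} (hx : x ∈ wpSet d k l p) :
    wpNorm d k l p ≤ x := csInf_le (bddBelow_wpSet d k l p) hx

lemma zero_mem_wpSet (d k l : ℕ) : (0 : ℝ) ∈ wpSet d k l (0 : MvP d) :=
  ⟨0, Fin.elim0, Fin.elim0, fun j => j.elim0, fun j => j.elim0, by simp, by simp⟩

lemma wpNorm_zero (d k l : ℕ) : wpNorm d k l (0 : MvP d) = 0 :=
  le_antisymm (wpNorm_le_of_mem (zero_mem_wpSet d k l)) (wpNorm_nonneg d k l 0)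

lemma mul_mem_wpSet {d k l : ℕ} {f g : MvP d} (hf : f.IsHomogeneous k)
    (hg : g.IsHomogeneous l) : norm2 f * norm2 g ∈ wpSet d k l (f * g) :=
  ⟨1, fun _ => f, fun _ => g, fun _ => hf, fun _ => hg, by simp, by simp⟩

/-- Every homogeneous polynomial of degree `n` admits a weak-product decomposition. -/
lemma wpSet_nonempty {d n k : ℕ} (hk : k ≤ n) {p : MvP d} (hp : p.IsHomogeneous n) :
    (wpSet d k (n - k) p).Nonempty := by
  classical
  have hsplit : ∀ α ∈ p.support, ∃ β γ : Fin d →₀ ℕ,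
      β.degree = k ∧ γ.degree = (n - k) ∧ α = β + γ := by
    intro α hα
    refine exists_split hk α ?_
    rw [Finsupp.degree_eq_weight_one]
    exact hp (MvPolynomial.mem_support_iff.mp hα)
  choose! β γ hβ hγ hαβγ using hsplit
  set m := p.support.card
  have e : Fin m ≃ {x // x ∈ p.support} := p.support.equivFin.symm
  refine ⟨∑ j : Fin m, norm2 (MvPolynomial.monomial (β (e j)) (p.coeff (e j)))
      * norm2 (MvPolynomial.monomial (γ (e j)) (1 : ℂ)), ?_⟩
  refine ⟨m, fun j => MvPolynomial.monomial (β (e j)) (p.coeff (e j)),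
    fun j => MvPolynomial.monomial (γ (e j)) 1, ?_, ?_, ?_, rfl⟩
  · intro j
    exact MvPolynomial.isHomogeneous_monomial _ (hβ _ (e j).2)
  · intro j
    exact MvPolynomial.isHomogeneous_monomial _ (hγ _ (e j).2)
  · have key : ∀ j : Fin m,
        MvPolynomial.monomial (β (e j)) (p.coeff (e j)) * MvPolynomial.monomial (γ (e j)) 1
        = MvPolynomial.monomial ((e j) : Fin d →₀ ℕ) (p.coeff (e j)) := by
      intro j
      rw [MvPolynomial.monomial_mul, mul_one, ← hαβγ _ (e j).2]
    rw [Finset.sum_congr rfl fun j _ => key j]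
    symm
    calc ∑ j : Fin m, MvPolynomial.monomial ((e j) : Fin d →₀ ℕ) (p.coeff (e j))
        = ∑ a : {x // x ∈ p.support}, MvPolynomial.monomial (a : Fin d →₀ ℕ) (p.coeff a) :=
          Equiv.sum_comp e (fun a => MvPolynomial.monomial (a : Fin d →₀ ℕ) (p.coeff a))
      _ = ∑ α ∈ p.support, MvPolynomial.monomial α (p.coeff α) :=
          Finset.sum_coe_sort p.support (fun a => MvPolynomial.monomial a (p.coeff a))
      _ = p := MvPolynomial.support_sum_monomial_coeff p


def hanSet (d n k : ℕ) (q : MvP d) : Set ℝ :=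
  {x : ℝ | ∃ f g : MvP d, f.IsHomogeneous k ∧ g.IsHomogeneous (n - k) ∧
    norm2 f ≤ 1 ∧ norm2 g ≤ 1 ∧ x = ‖pairing q (hatp f * g)‖}

lemma hanNorm_eq (d n k : ℕ) (q : MvP d) : hanNorm d n k q = sSup (hanSet d n k q) := rfl

lemma zero_mem_hanSet (d n k : ℕ) (q : MvP d) : (0 : ℝ) ∈ hanSet d n k q := by
  refine ⟨0, 0, MvPolynomial.isHomogeneous_zero _ _ _, MvPolynomial.isHomogeneous_zero _ _ _,
    by rw [norm2_zero]; norm_num, by rw [norm2_zero]; norm_num, ?_⟩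
  rw [hatp_zero, zero_mul, pairing_zero_right, norm_zero]

lemma l1_hatp {d : ℕ} (f : MvP d) : l1 (hatp f) = l1 f := by
  unfold l1
  rw [hatp_support]
  exact Finset.sum_congr rfl fun α _ => by rw [coeff_hatp, RCLike.norm_conj]

lemma bddAbove_hanSet (d n k : ℕ) (q : MvP d) : BddAbove (hanSet d n k q) := by
  refine ⟨l1 q * (((degFinset d k).card : ℝ) * ((degFinset d (n - k)).card : ℝ)), ?_⟩
  rintro x ⟨f, g, hf, hg, hf1, hg1, rfl⟩
  have h1 : ∀ α, ‖(hatp f * g).coeff α‖ ≤ l1 f * l1 g := by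
    intro α
    have := coeff_mul_norm_le (hatp f) g α
    rwa [l1_hatp] at this
  refine (norm_pairing_le_l1_mul q _ (l1 f * l1 g) h1).trans ?_
  refine mul_le_mul_of_nonneg_left ?_ (l1_nonneg q)
  have h2 : l1 f ≤ ((degFinset d k).card : ℝ) := by
    have := l1_le hf
    nlinarith [norm2_nonneg f, Nat.cast_nonneg (α := ℝ) (degFinset d k).card]
  have h3 : l1 g ≤ ((degFinset d (n - k)).card : ℝ) := by
    have := l1_le hg
    nlinarith [norm2_nonneg g, Nat.cast_nonneg (α := ℝ) (degFinset d (n - k)).card]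
  exact mul_le_mul h2 h3 (l1_nonneg g) (Nat.cast_nonneg _)

lemma hanNorm_nonneg (d n k : ℕ) (q : MvP d) : 0 ≤ hanNorm d n k q :=
  le_csSup (bddAbove_hanSet d n k q) (zero_mem_hanSet d n k q)

lemma le_hanNorm_of_mem {d n k : ℕ} {q : MvP d} {x : ℝ} (hx : x ∈ hanSet d n k q) :
    x ≤ hanNorm d n k q := le_csSup (bddAbove_hanSet d n k q) hx

lemma hanNorm_zero (d n k : ℕ) : hanNorm d n k (0 : MvP d) = 0 := by
  refine le_antisymm ?_ (hanNorm_nonneg d n k 0)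
  refine csSup_le ⟨0, zero_mem_hanSet d n k 0⟩ ?_
  rintro x ⟨f, g, _, _, _, _, rfl⟩
  rw [pairing_zero_left, norm_zero]

lemma isHomogeneous_smul {d k : ℕ} (c : ℂ) {f : MvP d} (hf : f.IsHomogeneous k) :
    (c • f).IsHomogeneous k := by
  rw [← MvPolynomial.mem_homogeneousSubmodule] at hf ⊢
  exact Submodule.smul_mem _ c hf

/-- The fundamental estimate: `|⟨f·g, q⟩| ≤ ‖f‖₂ ‖g‖₂ ‖q‖_{Han}`. -/
lemma norm_pairing_mul_le {d n k : ℕ} (q : MvP d) {f g : MvP d}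
    (hf : f.IsHomogeneous k) (hg : g.IsHomogeneous (n - k)) :
    ‖pairing (f * g) q‖ ≤ norm2 f * norm2 g * hanNorm d n k q := by
  rcases eq_or_ne f 0 with rfl | hf0
  · rw [zero_mul, pairing_zero_left, norm_zero, norm2_zero, zero_mul, zero_mul]
  rcases eq_or_ne g 0 with rfl | hg0
  · rw [mul_zero, pairing_zero_left, norm_zero, norm2_zero, mul_zero, zero_mul]
  have hfpos : 0 < norm2 f := lt_of_le_of_ne (norm2_nonneg f) (fun h => hf0 (norm2_eq_zero h.symm))
  have hgpos : 0 < norm2 g := lt_of_le_of_ne (norm2_nonneg g) (fun h => hg0 (norm2_eq_zero h.symm))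
  set a : ℂ := (((norm2 f)⁻¹ : ℝ) : ℂ)
  set b : ℂ := (((norm2 g)⁻¹ : ℝ) : ℂ)
  have hna : ‖a‖ = (norm2 f)⁻¹ := by
    rw [Complex.norm_real, Real.norm_of_nonneg (by positivity)]
  have hnb : ‖b‖ = (norm2 g)⁻¹ := by
    rw [Complex.norm_real, Real.norm_of_nonneg (by positivity)]
  have hmem : (norm2 f)⁻¹ * (norm2 g)⁻¹ * ‖pairing (f * g) q‖ ∈ hanSet d n k q := by
    refine ⟨a • hatp f, b • g, isHomogeneous_smul a (hatp_isHomogeneous hf),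
      isHomogeneous_smul b hg, ?_, ?_, ?_⟩
    · rw [norm2_smul, hna, norm2_hatp, inv_mul_cancel₀ (ne_of_gt hfpos)]
    · rw [norm2_smul, hnb, inv_mul_cancel₀ (ne_of_gt hgpos)]
    · have h1 : hatp (a • hatp f) = a • f := by
        rw [hatp_smul, hatp_hatp, Complex.conj_ofReal]
      rw [h1, smul_mul_smul_comm, pairing_smul_right, norm_mul, RCLike.norm_conj, norm_mul,
        hna, hnb, norm_pairing_comm]
  have := le_hanNorm_of_mem hmem
  calc ‖pairing (f * g) q‖
      = (norm2 f * norm2 g) * ((norm2 f)⁻¹ * (norm2 g)⁻¹ * ‖pairing (f * g) q‖) := by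
        field_simp
    _ ≤ (norm2 f * norm2 g) * hanNorm d n k q := by
        refine mul_le_mul_of_nonneg_left this (by positivity)
    _ = norm2 f * norm2 g * hanNorm d n k q := by ring

/-- Core inequality: `|⟨h, q⟩| ≤ ‖h‖_{wp} ‖q‖_{Han}`. -/
lemma norm_pairing_le_wp_mul_han {d n k : ℕ} (hk : k ≤ n) {h : MvP d}
    (hh : h.IsHomogeneous n) (q : MvP d) :
    ‖pairing h q‖ ≤ wpNorm d k (n - k) h * hanNorm d n k q := by
  have key : ∀ x ∈ wpSet d k (n - k) h, ‖pairing h q‖ ≤ x * hanNorm d n k q := by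
    rintro x ⟨m, f, g, hf, hg, rfl, rfl⟩
    rw [pairing_sum_left]
    refine (norm_sum_le _ _).trans ?_
    rw [Finset.sum_mul]
    exact Finset.sum_le_sum fun j _ => norm_pairing_mul_le q (hf j) (hg j)
  obtain ⟨x0, hx0⟩ := wpSet_nonempty hk hh
  rcases eq_or_lt_of_le (hanNorm_nonneg d n k q) with hH | hH
  · have h0 := key x0 hx0
    have he : x0 * hanNorm d n k q = wpNorm d k (n - k) h * hanNorm d n k q := by
      rw [← hH, mul_zero, mul_zero]
    rw [he] at h0
    exact h0
  · rw [← div_le_iff₀ hH]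
    rw [wpNorm_eq]
    refine le_csInf ⟨x0, hx0⟩ fun x hx => ?_
    rw [div_le_iff₀ hH]
    exact key x hx

/-- `‖h‖₂ ≤ C ‖h‖_{wp}` for homogeneous `h`. -/
lemma norm2_le_wp {d n k : ℕ} (hd : 1 ≤ d) (hk : k ≤ n) {h : MvP d}
    (hh : h.IsHomogeneous n) :
    norm2 h ≤ (((degFinset d n).card : ℝ) * ((degFinset d k).card : ℝ)
      * ((degFinset d (n - k)).card : ℝ)) * wpNorm d k (n - k) h := by
  set C : ℝ := ((degFinset d n).card : ℝ) * ((degFinset d k).card : ℝ)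
      * ((degFinset d (n - k)).card : ℝ) with hC
  have hcard : ∀ j : ℕ, (1 : ℝ) ≤ ((degFinset d j).card : ℝ) := by
    intro j
    have hmem : (Finsupp.single (⟨0, hd⟩ : Fin d) j) ∈ degFinset d j := by
      simp only [degFinset, Set.Finite.mem_toFinset, Set.mem_setOf_eq]
      exact degree_single _ _
    have := Finset.card_pos.mpr ⟨_, hmem⟩
    exact_mod_cast this
  have hCpos : 0 < C := by
    rw [hC]
    have h1 := lt_of_lt_of_le one_pos (hcard n)
    have h2 := lt_of_lt_of_le one_pos (hcard k)
    have h3 := lt_of_lt_of_le one_pos (hcard (n - k))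
    exact mul_pos (mul_pos h1 h2) h3
  rcases eq_or_ne (norm2 h) 0 with h0 | h0
  · rw [h0]
    exact mul_nonneg (le_of_lt hCpos) (wpNorm_nonneg _ _ _ _)
  have hpos : 0 < norm2 h := lt_of_le_of_ne (norm2_nonneg h) (Ne.symm h0)
  have key : ∀ x ∈ wpSet d k (n - k) h, norm2 h ≤ C * x := by
    rintro x ⟨m, f, g, hf, hg, hrep, rfl⟩
    have h1 : (norm2 h) ^ 2 = ‖pairing h h‖ := by
      rw [pairing_self]
      rw [Complex.norm_real, Real.norm_of_nonneg (by positivity)]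
    have h2 : ‖pairing h h‖ ≤ ∑ j, ‖pairing (f j * g j) h‖ := by
      nth_rewrite 1 [hrep]
      rw [pairing_sum_left]
      exact norm_sum_le _ _
    have h3 : ∀ j, ‖pairing (f j * g j) h‖ ≤
        (((degFinset d n).card : ℝ) * norm2 h) * ((((degFinset d k).card : ℝ) * norm2 (f j))
          * (((degFinset d (n - k)).card : ℝ) * norm2 (g j))) := by
      intro j
      rw [norm_pairing_comm]
      have hb : ∀ α, ‖(f j * g j).coeff α‖ ≤ l1 (f j) * l1 (g j) := coeff_mul_norm_le _ _
      refine (norm_pairing_le_l1_mul h _ _ hb).trans ?_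
      have e1 := l1_le hh
      have e2 := l1_le (hf j)
      have e3 := l1_le (hg j)
      have n2 := l1_nonneg (g j)
      have hA : l1 (f j) * l1 (g j) ≤ (((degFinset d k).card : ℝ) * norm2 (f j))
          * (((degFinset d (n - k)).card : ℝ) * norm2 (g j)) :=
        mul_le_mul e2 e3 n2 (mul_nonneg (Nat.cast_nonneg _) (norm2_nonneg _))
      exact mul_le_mul e1 hA (mul_nonneg (l1_nonneg _) (l1_nonneg _))
        (mul_nonneg (Nat.cast_nonneg _) (norm2_nonneg _))
    have h4 : (norm2 h) ^ 2 ≤ C * norm2 h * (∑ j, norm2 (f j) * norm2 (g j)) := by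
      rw [h1]
      refine h2.trans ?_
      rw [Finset.mul_sum]
      refine (Finset.sum_le_sum fun j _ => h3 j).trans ?_
      refine Finset.sum_le_sum fun j _ => le_of_eq ?_
      rw [hC]; ring
    refine le_of_mul_le_mul_right ?_ hpos
    calc norm2 h * norm2 h = (norm2 h) ^ 2 := (sq (norm2 h)).symm
      _ ≤ C * norm2 h * (∑ j, norm2 (f j) * norm2 (g j)) := h4
      _ = C * (∑ j, norm2 (f j) * norm2 (g j)) * norm2 h := by ring
  obtain ⟨x0, hx0⟩ := wpSet_nonempty hk hh
  rw [← div_le_iff₀' hCpos, wpNorm_eq]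
  refine le_csInf ⟨x0, hx0⟩ fun x hx => ?_
  rw [div_le_iff₀' hCpos]
  exact key x hx


lemma zero_mem_S1 {d n k : ℕ} (q : MvP d) :
    (0 : ℝ) ∈ {x : ℝ | ∃ h : MvP d, h.IsHomogeneous n ∧
      wpNorm d k (n - k) h ≤ 1 ∧ x = ‖pairing h q‖} := by
  refine ⟨0, MvPolynomial.isHomogeneous_zero _ _ _, ?_, by rw [pairing_zero_left, norm_zero]⟩
  rw [wpNorm_zero]
  norm_num

lemma bddAbove_S1 {d n k : ℕ} (hk : k ≤ n) (q : MvP d) :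
    BddAbove {x : ℝ | ∃ h : MvP d, h.IsHomogeneous n ∧
      wpNorm d k (n - k) h ≤ 1 ∧ x = ‖pairing h q‖} := by
  refine ⟨hanNorm d n k q, ?_⟩
  rintro x ⟨h, hh, hwp, rfl⟩
  calc ‖pairing h q‖ ≤ wpNorm d k (n - k) h * hanNorm d n k q :=
        norm_pairing_le_wp_mul_han hk hh q
    _ ≤ 1 * hanNorm d n k q := mul_le_mul_of_nonneg_right hwp (hanNorm_nonneg d n k q)
    _ = hanNorm d n k q := one_mul _

/-- Part (1) of the duality. -/
lemma part1 {d n k : ℕ} (hk : k ≤ n) (q : MvP d) (hq : q.IsHomogeneous n) :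
    hanNorm d n k q =
      sSup {x : ℝ | ∃ h : MvP d, h.IsHomogeneous n ∧
        wpNorm d k (n - k) h ≤ 1 ∧ x = ‖pairing h q‖} := by
  refine le_antisymm ?_ ?_
  · rw [hanNorm_eq]
    refine csSup_le ⟨0, zero_mem_hanSet d n k q⟩ ?_
    rintro x ⟨f, g, hf, hg, hf1, hg1, rfl⟩
    refine le_csSup (bddAbove_S1 hk q) ?_
    refine ⟨hatp f * g, ?_, ?_, ?_⟩
    · have := (hatp_isHomogeneous hf).mul hg
      rwa [Nat.add_sub_cancel' hk] at this
    · refine (wpNorm_le_of_mem (mul_mem_wpSet (hatp_isHomogeneous hf) hg)).trans ?_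
      rw [norm2_hatp]
      exact mul_le_one₀ hf1 (norm2_nonneg g) hg1
    · rw [norm_pairing_comm]
  · refine csSup_le ⟨0, zero_mem_S1 q⟩ ?_
    rintro x ⟨h, hh, hwp, rfl⟩
    calc ‖pairing h q‖ ≤ wpNorm d k (n - k) h * hanNorm d n k q :=
          norm_pairing_le_wp_mul_han hk hh q
      _ ≤ 1 * hanNorm d n k q := mul_le_mul_of_nonneg_right hwp (hanNorm_nonneg d n k q)
      _ = hanNorm d n k q := one_mul _

lemma zero_mem_S2 {d n k : ℕ} (h : MvP d) :
    (0 : ℝ) ∈ {x : ℝ | ∃ q : MvP d, q.IsHomogeneous n ∧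
      hanNorm d n k q ≤ 1 ∧ x = ‖pairing h q‖} := by
  refine ⟨0, MvPolynomial.isHomogeneous_zero _ _ _, ?_, by rw [pairing_zero_right, norm_zero]⟩
  rw [hanNorm_zero]
  norm_num

lemma S2_le {d n k : ℕ} (hk : k ≤ n) {h : MvP d} (hh : h.IsHomogeneous n) {x : ℝ}
    (hx : x ∈ {x : ℝ | ∃ q : MvP d, q.IsHomogeneous n ∧
      hanNorm d n k q ≤ 1 ∧ x = ‖pairing h q‖}) : x ≤ wpNorm d k (n - k) h := by
  obtain ⟨q, hq, hq1, rfl⟩ := hx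
  calc ‖pairing h q‖ ≤ wpNorm d k (n - k) h * hanNorm d n k q :=
        norm_pairing_le_wp_mul_han hk hh q
    _ ≤ wpNorm d k (n - k) h * 1 :=
        mul_le_mul_of_nonneg_left hq1 (wpNorm_nonneg _ _ _ _)
    _ = wpNorm d k (n - k) h := mul_one _


lemma hatp_add {d : ℕ} (f g : MvP d) : hatp (f + g) = hatp f + hatp g := by
  ext α
  simp [coeff_hatp]

lemma hatp_ne_zero {d : ℕ} {f : MvP d} (hf : f ≠ 0) : hatp f ≠ 0 := by
  intro h
  apply hf
  rw [← hatp_hatp f, h, hatp_zero]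

lemma smul_mem_wpSet {d k l : ℕ} {p : MvP d} {x : ℝ} (hx : x ∈ wpSet d k l p) (c : ℂ) :
    ‖c‖ * x ∈ wpSet d k l (c • p) := by
  obtain ⟨m, f, g, hf, hg, rfl, rfl⟩ := hx
  refine ⟨m, fun j => c • f j, g, fun j => isHomogeneous_smul c (hf j), hg, ?_, ?_⟩
  · rw [Finset.smul_sum]
    exact Finset.sum_congr rfl fun j _ => (smul_mul_assoc c (f j) (g j)).symm
  · rw [Finset.mul_sum]
    refine Finset.sum_congr rfl fun j _ => ?_
    rw [norm2_smul]
    ring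

lemma wpNorm_smul {d n k : ℕ} (hk : k ≤ n) (c : ℂ) {p : MvP d} (hp : p.IsHomogeneous n) :
    wpNorm d k (n - k) (c • p) = ‖c‖ * wpNorm d k (n - k) p := by
  have hle : ∀ (c : ℂ) (p : MvP d), p.IsHomogeneous n →
      wpNorm d k (n - k) (c • p) ≤ ‖c‖ * wpNorm d k (n - k) p := by
    intro c p hp
    rcases eq_or_ne c 0 with rfl | hc
    · rw [zero_smul, wpNorm_zero, norm_zero, zero_mul]
    have hcpos : (0 : ℝ) < ‖c‖ := norm_pos_iff.mpr hc
    rw [← div_le_iff₀' hcpos, wpNorm_eq _ _ _ p, le_csInf_iff (bddBelow_wpSet d k (n - k) p)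
      (wpSet_nonempty hk hp)]
    intro x hx
    rw [div_le_iff₀' hcpos]
    exact wpNorm_le_of_mem (smul_mem_wpSet hx c)
  refine le_antisymm (hle c p hp) ?_
  rcases eq_or_ne c 0 with rfl | hc
  · rw [zero_smul, wpNorm_zero, norm_zero, zero_mul]
  have h2 := hle c⁻¹ (c • p) (isHomogeneous_smul c hp)
  rw [inv_smul_smul₀ hc, norm_inv] at h2
  have hcpos : (0 : ℝ) < ‖c‖ := norm_pos_iff.mpr hc
  calc ‖c‖ * wpNorm d k (n - k) p
      ≤ ‖c‖ * (‖c‖⁻¹ * wpNorm d k (n - k) (c • p)) :=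
        mul_le_mul_of_nonneg_left h2 (le_of_lt hcpos)
    _ = wpNorm d k (n - k) (c • p) := by
        have : ‖c‖ ≠ 0 := by
          simpa using ne_of_gt hcpos
        field_simp

lemma add_mem_wpSet {d k l : ℕ} {p p' : MvP d} {x y : ℝ}
    (hx : x ∈ wpSet d k l p) (hy : y ∈ wpSet d k l p') :
    x + y ∈ wpSet d k l (p + p') := by
  obtain ⟨m, f, g, hf, hg, rfl, rfl⟩ := hx
  obtain ⟨m', f', g', hf', hg', rfl, rfl⟩ := hy
  refine ⟨m + m', Fin.append f f', Fin.append g g', ?_, ?_, ?_, ?_⟩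
  · intro j
    refine Fin.addCases (fun i => ?_) (fun i => ?_) j
    · rw [Fin.append_left]; exact hf i
    · rw [Fin.append_right]; exact hf' i
  · intro j
    refine Fin.addCases (fun i => ?_) (fun i => ?_) j
    · rw [Fin.append_left]; exact hg i
    · rw [Fin.append_right]; exact hg' i
  · rw [Fin.sum_univ_add]
    congr 1
    · exact Finset.sum_congr rfl fun i _ => by rw [Fin.append_left, Fin.append_left]
    · exact Finset.sum_congr rfl fun i _ => by rw [Fin.append_right, Fin.append_right]
  · rw [Fin.sum_univ_add]
    congr 1
    · exact Finset.sum_congr rfl fun i _ => by rw [Fin.append_left, Fin.append_left]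
    · exact Finset.sum_congr rfl fun i _ => by rw [Fin.append_right, Fin.append_right]

lemma wpNorm_add_le {d n k : ℕ} (hk : k ≤ n) {p p' : MvP d}
    (hp : p.IsHomogeneous n) (hp' : p'.IsHomogeneous n) :
    wpNorm d k (n - k) (p + p') ≤ wpNorm d k (n - k) p + wpNorm d k (n - k) p' := by
  have step : ∀ x ∈ wpSet d k (n - k) p, ∀ y ∈ wpSet d k (n - k) p',
      wpNorm d k (n - k) (p + p') ≤ x + y :=
    fun x hx y hy => wpNorm_le_of_mem (add_mem_wpSet hx hy)
  have h1 : ∀ x ∈ wpSet d k (n - k) p,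
      wpNorm d k (n - k) (p + p') - x ≤ wpNorm d k (n - k) p' := by
    intro x hx
    rw [wpNorm_eq _ _ _ p']
    refine le_csInf (wpSet_nonempty hk hp') fun y hy => ?_
    linarith [step x hx y hy]
  have h2 : wpNorm d k (n - k) (p + p') - wpNorm d k (n - k) p' ≤ wpNorm d k (n - k) p := by
    rw [wpNorm_eq _ _ _ p]
    refine le_csInf (wpSet_nonempty hk hp) fun x hx => ?_
    linarith [h1 x hx]
  linarith


open MvPolynomial

set_option maxHeartbeats 2000000 in
lemma part2_le {d n k : ℕ} (hd : 1 ≤ d) (hk : k ≤ n) {h : MvP d}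
    (hh : h.IsHomogeneous n) :
    wpNorm d k (n - k) h ≤ sSup {x : ℝ | ∃ q : MvP d, q.IsHomogeneous n ∧
      hanNorm d n k q ≤ 1 ∧ x = ‖pairing h q‖} := by
  classical
  have hbdd : BddAbove {x : ℝ | ∃ q : MvP d, q.IsHomogeneous n ∧
      hanNorm d n k q ≤ 1 ∧ x = ‖pairing h q‖} :=
    ⟨wpNorm d k (n - k) h, fun x hx => S2_le hk hh hx⟩
  rcases eq_or_ne h 0 with rfl | hne
  · rw [wpNorm_zero]
    exact le_csSup hbdd (zero_mem_S2 0)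
  -- the homogeneous subspace with the weak product norm
  set E : Submodule ℂ (MvP d) := homogeneousSubmodule (Fin d) ℂ n with hE
  letI : NormedAddCommGroup ↥E := AddGroupNorm.toNormedAddCommGroup
    { toFun := fun p => wpNorm d k (n - k) (p : MvP d)
      map_zero' := by simpa using wpNorm_zero d k (n - k)
      add_le' := fun p q => wpNorm_add_le hk p.2 q.2
      neg' := fun p => by
        show wpNorm d k (n - k) ((-p : ↥E) : MvP d) = wpNorm d k (n - k) (p : MvP d)
        have h1 : ((-p : ↥E) : MvP d) = ((-1 : ℂ) • (p : MvP d)) := by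
          simp
        rw [h1, wpNorm_smul hk _ p.2]
        simp
      eq_zero_of_map_eq_zero' := fun p hp => by
        have hp' : wpNorm d k (n - k) (p : MvP d) = 0 := hp
        have h1 := norm2_le_wp hd hk p.2
        rw [hp', mul_zero] at h1
        have h2 : norm2 (p : MvP d) = 0 := le_antisymm h1 (norm2_nonneg _)
        exact Subtype.ext (norm2_eq_zero h2) }
  letI : NormedSpace ℂ ↥E :=
    { norm_smul_le := fun c p => by
        show wpNorm d k (n - k) ((c • p : ↥E) : MvP d)
          ≤ ‖c‖ * wpNorm d k (n - k) (p : MvP d)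
        have h1 : ((c • p : ↥E) : MvP d) = c • (p : MvP d) := rfl
        rw [h1, wpNorm_smul hk c p.2] }
  haveI : FiniteDimensional ℂ ↥E := by
    refine Submodule.finiteDimensional_of_le (S₂ := restrictTotalDegree (Fin d) ℂ n) ?_
    intro p hp
    rw [mem_restrictTotalDegree]
    exact MvPolynomial.IsHomogeneous.totalDegree_le hp
  set h0 : ↥E := ⟨h, hh⟩ with hh0
  have h0ne : h0 ≠ 0 := fun hcon => hne (by simpa [hh0] using congrArg Subtype.val hcon)
  obtain ⟨φ, hφ1, hφx⟩ := exists_dual_vector ℂ h0 (norm_ne_zero_iff.mpr h0ne)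
  -- represent φ by pairing against a homogeneous polynomial
  have hmap : ∀ (q : ↥E), ∃ F : ↥E →ₗ[ℂ] ℂ, True := fun q => ⟨0, trivial⟩
  let Lmap : ↥E →ₗ[ℂ] (↥E →ₗ[ℂ] ℂ) :=
    { toFun := fun q =>
        { toFun := fun p => pairing (p : MvP d) (hatp (q : MvP d))
          map_add' := fun p p' => pairing_add_left _ _ _
          map_smul' := fun c p => pairing_smul_left c _ _ }
      map_add' := fun q q' => by
        ext p
        show pairing _ (hatp ((q : MvP d) + (q' : MvP d))) = _
        rw [hatp_add, pairing_add_right]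
        rfl
      map_smul' := fun c q => by
        ext p
        show pairing _ (hatp (c • (q : MvP d))) = _
        rw [hatp_smul, pairing_smul_right, Complex.conj_conj]
        rfl }
  have hinj : Function.Injective Lmap := by
    intro q q' hqq'
    by_contra hne'
    have hsub : q - q' ≠ 0 := fun hcon => hne' (sub_eq_zero.mp hcon)
    have hval : Lmap (q - q') = 0 := by rw [map_sub, hqq', sub_self]
    have hsub1 : ((q - q' : ↥E) : MvP d) ≠ 0 := fun hcon => hsub (Subtype.ext hcon)
    have hpair : Lmap (q - q') ⟨hatp ((q - q' : ↥E) : MvP d),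
        hatp_isHomogeneous (q - q').2⟩ = 0 := by rw [hval]; rfl
    have : pairing (hatp ((q - q' : ↥E) : MvP d)) (hatp ((q - q' : ↥E) : MvP d)) = 0 := hpair
    rw [pairing_self] at this
    have hn0 : norm2 (hatp ((q - q' : ↥E) : MvP d)) = 0 := by
      have := Complex.ofReal_eq_zero.mp this
      nlinarith [norm2_nonneg (hatp ((q - q' : ↥E) : MvP d))]
    exact hatp_ne_zero hsub1 (norm2_eq_zero hn0)
  have hsur : Function.Surjective Lmap := by
    have hfr : Module.finrank ℂ ↥E = Module.finrank ℂ (↥E →ₗ[ℂ] ℂ) :=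
      (Subspace.dual_finrank_eq (K := ℂ) (V := ↥E)).symm
    exact (LinearMap.injective_iff_surjective_of_finrank_eq_finrank hfr).mp hinj
  obtain ⟨q0, hq0⟩ := hsur (φ : ↥E →ₗ[ℂ] ℂ)
  set qq : MvP d := hatp (q0 : MvP d) with hqq
  have hqqhom : qq.IsHomogeneous n := hatp_isHomogeneous q0.2
  have hφval : ∀ p : ↥E, φ p = pairing (p : MvP d) qq := by
    intro p
    have := congrFun (congrArg (fun (F : ↥E →ₗ[ℂ] ℂ) => (F : ↥E → ℂ)) hq0) p
    exact this.symm
  -- the Hankel norm of qq is the dual norm of φ, which is 1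
  have hhan : hanNorm d n k qq = 1 := by
    rw [part1 hk qq hqqhom]
    have hset : {x : ℝ | ∃ h' : MvP d, h'.IsHomogeneous n ∧
        wpNorm d k (n - k) h' ≤ 1 ∧ x = ‖pairing h' qq‖}
        = (fun p : ↥E => ‖φ p‖) '' Metric.closedBall 0 1 := by
      ext x
      constructor
      · rintro ⟨h', hh', hwp, rfl⟩
        refine ⟨⟨h', hh'⟩, ?_, ?_⟩
        · rw [Metric.mem_closedBall, dist_zero_right]
          exact hwp
        · show ‖φ ⟨h', hh'⟩‖ = ‖pairing h' qq‖
          rw [hφval]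
      · rintro ⟨p, hp, rfl⟩
        refine ⟨(p : MvP d), p.2, ?_, ?_⟩
        · rw [Metric.mem_closedBall, dist_zero_right] at hp
          exact hp
        · show ‖φ p‖ = ‖pairing (p : MvP d) qq‖
          rw [hφval]
    rw [hset, ContinuousLinearMap.sSup_unitClosedBall_eq_norm, hφ1]
  have hfinal : wpNorm d k (n - k) h = ‖pairing h qq‖ := by
    have h1 : φ h0 = pairing h qq := hφval h0
    have h3 : ‖φ h0‖ = ‖h0‖ := by
      rw [hφx]
      simp
    calc wpNorm d k (n - k) h = ‖h0‖ := rfl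
      _ = ‖φ h0‖ := h3.symm
      _ = ‖pairing h qq‖ := by rw [h1]
  rw [hfinal]
  exact le_csSup hbdd ⟨qq, hqqhom, le_of_eq hhan, rfl⟩

/-- Lemma 2.1 (1): duality of `‖·‖_{Han_k}` and `‖·‖_{P_{d,k} ⊙ P_{d,n-k}}` on
`P_{d,n}` with respect to the Cauchy pairing; in finite dimensions the two displayed
supremum formulas express that `q ↦ ⟨·,q⟩₂` is a conjugate-linear isometric
isomorphism in both directions. -/
theorem hankel_weakProduct_duality (d n k : ℕ) (hd : 1 ≤ d) (hn : 1 ≤ n)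
    (hk : k ≤ n) :
    (∀ q : MvP d, q.IsHomogeneous n →
      hanNorm d n k q =
        sSup {x : ℝ | ∃ h : MvP d, h.IsHomogeneous n ∧
          wpNorm d k (n - k) h ≤ 1 ∧ x = ‖pairing h q‖}) ∧
    (∀ h : MvP d, h.IsHomogeneous n →
      wpNorm d k (n - k) h =
        sSup {x : ℝ | ∃ q : MvP d, q.IsHomogeneous n ∧
          hanNorm d n k q ≤ 1 ∧ x = ‖pairing h q‖}) := by
  constructor
  · exact fun q hq => part1 hk q hq
  · intro h hh
    refine le_antisymm (part2_le hd hk hh) ?_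
    exact csSup_le ⟨0, zero_mem_S2 h⟩ fun x hx => S2_le hk hh hx

end WP
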